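/- Let K : (0,1) → ℝ⁺ be continuous, square integrable with respect to Lebesgue measure on (0,1), and expressible as the difference of two monotone increasing functions. Let x_1, x_2, … be i.i.d. real random variables with continuous cumulative distribution function P_X, let r_l^{(L)} denote the rank of x_l among x_1, …, x_L, and set u_l = P_X(x_l) (so u_l is uniformly distributed on (0,1)). Then for each fixed index l, K(r_l^{(L)}/(L+1)) − K(u_l) converges to 0 in probability as L → ∞. -/

import Mathlib

open MeasureTheory ProbabilityTheory Filter Topology

lemma rank_aux_nu (ν : Measure ℝ) [IsProbabilityMeasure ν] (F : ℝ → ℝ)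
    (hF : ∀ t, F t = (ν (Set.Iic t)).toReal) (hFcont : Continuous F) :
    ν {t | F t ∉ Set.Ioo (0:ℝ) 1} = 0 := by
  have hFc : F = fun t => ProbabilityTheory.cdf ν t := by
    funext t; rw [hF t, ProbabilityTheory.cdf_eq_real]; rfl
  have hmono : Monotone F := by rw [hFc]; exact ProbabilityTheory.monotone_cdf ν
  have htop : Tendsto F atTop (𝓝 1) := by rw [hFc]; exact ProbabilityTheory.tendsto_cdf_atTop ν
  have hbot : Tendsto F atBot (𝓝 0) := by rw [hFc]; exact ProbabilityTheory.tendsto_cdf_atBot ν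
  have hF0 : ∀ t, 0 ≤ F t := fun t => by rw [hF t]; exact ENNReal.toReal_nonneg
  have hF1 : ∀ t, F t ≤ 1 := fun t => by
    rw [hF t]
    exact ENNReal.toReal_le_of_le_ofReal zero_le_one (by simpa using prob_le_one (μ := ν) (s := Set.Iic t))
  have hsplit : {t | F t ∉ Set.Ioo (0:ℝ) 1} ⊆ {t | F t = 0} ∪ {t | F t = 1} := by
    intro t ht
    simp only [Set.mem_Ioo, not_and_or, not_lt] at ht
    rcases ht with h | h
    · exact Or.inl (le_antisymm h (hF0 t))
    · exact Or.inr (le_antisymm (hF1 t) h)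
  have hA : ν {t | F t = 0} = 0 := by
    set A := {t | F t = 0} with hAdef
    rcases Set.eq_empty_or_nonempty A with h | hne
    · simp [h]
    by_cases hbd : BddAbove A
    · set s := sSup A with hs
      have hlub : IsLUB A s := isLUB_csSup hne hbd
      have hclosed : IsClosed A := isClosed_eq hFcont continuous_const
      have hsA : s ∈ A := hclosed.closure_subset (hlub.mem_closure hne)
      have hFs : F s = 0 := hsA
      have hIic : ν (Set.Iic s) = 0 := by
        have := hF s
        rw [hFs] at this
        exact (ENNReal.toReal_eq_zero_iff _).mp this.symm |>.resolve_right (measure_ne_top ν _)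
      have : A ⊆ Set.Iic s := fun a ha => le_csSup hbd ha
      exact le_antisymm (le_trans (measure_mono this) hIic.le) (zero_le)
    · exfalso
      have hAuniv : ∀ t, F t = 0 := by
        intro t
        obtain ⟨a, haA, hta⟩ := not_bddAbove_iff.mp hbd t
        exact le_antisymm (by calc F t ≤ F a := hmono hta.le
                                  _ = 0 := haA) (hF0 t)
      have : Tendsto F atTop (𝓝 0) := by
        simpa [funext hAuniv] using tendsto_const_nhds (α := ℝ) (f := atTop (α := ℝ)) (a := (0:ℝ))
      exact zero_ne_one (tendsto_nhds_unique this htop)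
  have hB : ν {t | F t = 1} = 0 := by
    set B := {t | F t = 1} with hBdef
    rcases Set.eq_empty_or_nonempty B with h | hne
    · simp [h]
    by_cases hbd : BddBelow B
    · set s := sInf B with hs
      have hglb : IsGLB B s := isGLB_csInf hne hbd
      have hclosed : IsClosed B := isClosed_eq hFcont continuous_const
      have hsB : s ∈ B := hclosed.closure_subset (hglb.mem_closure hne)
      have hFs : F s = 1 := hsB
      have hBsub : B ⊆ Set.Ici s := fun a ha => csInf_le hbd ha
      have hIci : ν (Set.Ici s) = 0 := by
        -- ν (Ici s) ≤ ν (Ioi (s - δ)) and toReal (ν (Ioi c)) = 1 - F c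
        have key : ∀ c : ℝ, (ν (Set.Ioi c)).toReal = 1 - F c := by
          intro c
          have hc : Set.Ioi c = (Set.Iic c)ᶜ := Set.compl_Iic.symm
          rw [hc, measure_compl measurableSet_Iic (measure_ne_top ν _), measure_univ,
            ENNReal.toReal_sub_of_le (prob_le_one) (by simp), ENNReal.toReal_one, hF c]
        have hle : ∀ n : ℕ, (ν (Set.Ici s)).toReal ≤ 1 - F (s - 1/(n+1)) := by
          intro n
          rw [← key]
          refine ENNReal.toReal_mono (measure_ne_top ν _) (measure_mono ?_)
          intro y hy
          have : (0:ℝ) < 1/(n+1) := by positivity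
          exact lt_of_lt_of_le (by linarith : s - 1/((n:ℝ)+1) < s) hy
        have hlim : Tendsto (fun n : ℕ => 1 - F (s - 1/(n+1))) atTop (𝓝 (1 - F s)) := by
          have h1 : Tendsto (fun n : ℕ => s - 1/(n+1)) atTop (𝓝 s) := by
            have : Tendsto (fun n : ℕ => 1/((n:ℝ)+1)) atTop (𝓝 0) := tendsto_one_div_add_atTop_nhds_zero_nat
            simpa using tendsto_const_nhds.sub this
          exact tendsto_const_nhds.sub (hFcont.continuousAt.tendsto.comp h1)
        rw [hFs] at hlim; simp only [sub_self] at hlim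
        have h0 : (ν (Set.Ici s)).toReal ≤ 0 := ge_of_tendsto hlim (Eventually.of_forall hle)
        have : (ν (Set.Ici s)).toReal = 0 := le_antisymm h0 ENNReal.toReal_nonneg
        exact ((ENNReal.toReal_eq_zero_iff _).mp this).resolve_right (measure_ne_top ν _)
      exact le_antisymm (le_trans (measure_mono hBsub) hIci.le) (zero_le)
    · exfalso
      have hAuniv : ∀ t, F t = 1 := by
        intro t
        obtain ⟨a, haB, hta⟩ := not_bddBelow_iff.mp hbd t
        exact le_antisymm (hF1 t) (by calc (1:ℝ) = F a := haB.symm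
                                          _ ≤ F t := hmono hta.le)
      have : Tendsto F atBot (𝓝 1) := by
        simpa [funext hAuniv] using tendsto_const_nhds (α := ℝ) (f := atBot (α := ℝ)) (a := (1:ℝ))
      exact one_ne_zero (tendsto_nhds_unique this hbot)
  exact le_antisymm (le_trans (measure_mono hsplit) (le_trans (measure_union_le _ _) (by simp [hA, hB]))) (zero_le)

lemma rank_integrable_of_bdd {α : Type*} [MeasurableSpace α] {μ : Measure α}
    [IsFiniteMeasure μ] {f : α → ℝ} (hf : Measurable f) (C : ℝ) (h : ∀ a, |f a| ≤ C) :
    Integrable f μ :=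
  (integrable_const C).mono' hf.aestronglyMeasurable
    (Eventually.of_forall (by simpa [Real.norm_eq_abs] using h))

lemma rank_aux_var {Ω : Type*} [MeasurableSpace Ω] (P : Measure Ω) [IsProbabilityMeasure P]
    (x : ℕ → Ω → ℝ) (hmeas : ∀ i, Measurable (x i))
    (hindep : iIndepFun x P)
    (ν : Measure ℝ) [IsProbabilityMeasure ν] (hid : ∀ i, P.map (x i) = ν)
    (F : ℝ → ℝ) (hF : ∀ t, F t = (ν (Set.Iic t)).toReal) (hFcont : Continuous F)
    (l L : ℕ) :
    ∫ ω, (∑ j ∈ Finset.range L,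
        ((if x j ω ≤ x l ω then (1:ℝ) else 0) - F (x l ω)))^2 ∂P ≤ L := by
  have hF0 : ∀ t, 0 ≤ F t := fun t => by rw [hF t]; exact ENNReal.toReal_nonneg
  have hF1 : ∀ t, F t ≤ 1 := fun t => by
    rw [hF t]
    exact ENNReal.toReal_le_of_le_ofReal zero_le_one
      (by simpa using prob_le_one (μ := ν) (s := Set.Iic t))
  set g : ℝ × ℝ → ℝ := fun p => (if p.1 ≤ p.2 then 1 else 0) - F p.2 with hgdef
  have hgmeas : Measurable g := by
    apply Measurable.sub
    · exact Measurable.ite (measurableSet_le measurable_fst measurable_snd)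
        measurable_const measurable_const
    · exact hFcont.measurable.comp measurable_snd
  have hgbd : ∀ p, |g p| ≤ 1 := by
    intro p
    have h0 := hF0 p.2; have h1 := hF1 p.2
    simp only [hgdef]
    split <;> rw [abs_le] <;> constructor <;> linarith
  have hg0 : ∀ t, ∫ a, g (a, t) ∂ν = 0 := by
    intro t
    have hind : (fun a => (if a ≤ t then (1:ℝ) else 0))
        = Set.indicator (Set.Iic t) (fun _ => (1:ℝ)) := by
      funext a; simp [Set.indicator_apply, Set.mem_Iic]
    have hint1 : Integrable (fun a => (if a ≤ t then (1:ℝ) else 0)) ν := by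
      rw [hind]; exact (integrable_const (1:ℝ)).indicator measurableSet_Iic
    have hgt : (fun a => g (a, t)) = fun a => (if a ≤ t then (1:ℝ) else 0) - F t := by
      funext a; simp [hgdef]
    rw [hgt, integral_sub hint1 (integrable_const _), hind,
      integral_indicator_const _ measurableSet_Iic, integral_const]
    simp [hF t, Measure.real]
  set Z : ℕ → Ω → ℝ := fun j ω => g (x j ω, x l ω) with hZdef
  have hZmeas : ∀ j, Measurable (Z j) := fun j =>
    hgmeas.comp ((hmeas j).prodMk (hmeas l))
  have hZbd : ∀ j ω, |Z j ω| ≤ 1 := fun j ω => hgbd _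
  have hZZint : ∀ j k, Integrable (fun ω => Z j ω * Z k ω) P := by
    intro j k
    refine rank_integrable_of_bdd ((hZmeas j).mul (hZmeas k)) 1 (fun ω => ?_)
    rw [abs_mul]
    exact mul_le_one₀ (hZbd j ω) (abs_nonneg _) (hZbd k ω)
  have hpair : ∀ j k, j ≠ k → P.map (fun ω => (x j ω, x k ω)) = ν.prod ν := by
    intro j k hjk
    have h := hindep.indepFun hjk
    rw [indepFun_iff_map_prod_eq_prod_map_map (hmeas j).aemeasurable
      (hmeas k).aemeasurable] at h
    rw [h, hid j, hid k]
  have htriple : ∀ j k, j ≠ l → k ≠ l → j ≠ k →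
      P.map (fun ω => ((x j ω, x k ω), x l ω)) = (ν.prod ν).prod ν := by
    intro j k hjl hkl hjk
    have h := hindep.indepFun_prodMk hmeas j k l hjl hkl
    rw [indepFun_iff_map_prod_eq_prod_map_map
      ((hmeas j).prodMk (hmeas k)).aemeasurable (hmeas l).aemeasurable] at h
    rw [h, hpair j k hjk, hid l]
  -- cross term with index l
  have hZl : ∀ ω, Z l ω = 1 - F (x l ω) := by
    intro ω; simp [hZdef, hgdef]
  have hcross_l : ∀ k, k ≠ l → ∫ ω, Z l ω * Z k ω ∂P = 0 := by
    intro k hkl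
    set ψ : ℝ × ℝ → ℝ := fun p => (1 - F p.2) * g p with hψdef
    have hψmeas : Measurable ψ :=
      ((measurable_const.sub (hFcont.measurable.comp measurable_snd))).mul hgmeas
    have hψbd : ∀ p, |ψ p| ≤ 1 := by
      intro p
      rw [hψdef, abs_mul]
      have h0 := hF0 p.2; have h1 := hF1 p.2
      refine mul_le_one₀ (by rw [abs_le]; constructor <;> linarith) (abs_nonneg _) (hgbd p)
    have heq : (fun ω => Z l ω * Z k ω) = fun ω => ψ (x k ω, x l ω) := by
      funext ω; rw [hZl ω]
    rw [heq]
    have hmapint : ∫ ω, ψ (x k ω, x l ω) ∂P = ∫ p, ψ p ∂(ν.prod ν) := by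
      rw [← hpair k l hkl]
      exact (integral_map ((hmeas k).prodMk (hmeas l)).aemeasurable
        hψmeas.aestronglyMeasurable).symm
    rw [hmapint, integral_prod_symm _ (rank_integrable_of_bdd hψmeas 1 hψbd)]
    have : ∀ t, ∫ a, ψ (a, t) ∂ν = 0 := by
      intro t
      simp only [hψdef]
      rw [integral_const_mul, hg0 t, mul_zero]
    simp_rw [this, integral_zero]
  have hcross : ∀ j k, j ≠ k → ∫ ω, Z j ω * Z k ω ∂P = 0 := by
    intro j k hjk
    rcases eq_or_ne j l with rfl | hjl
    · exact hcross_l k hjk.symm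
    rcases eq_or_ne k l with rfl | hkl
    · have hswap : (fun ω => Z j ω * Z k ω) = fun ω => Z k ω * Z j ω := by
        funext ω; ring
      rw [show ∫ ω, Z j ω * Z k ω ∂P = ∫ ω, Z k ω * Z j ω ∂P from by rw [hswap]]
      exact hcross_l j hjl
    -- distinct triple
    set φ : (ℝ × ℝ) × ℝ → ℝ := fun q => g (q.1.1, q.2) * g (q.1.2, q.2) with hφdef
    have hφmeas : Measurable φ := by
      apply Measurable.mul
      · exact hgmeas.comp ((measurable_fst.fst).prodMk measurable_snd)
      · exact hgmeas.comp ((measurable_fst.snd).prodMk measurable_snd)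
    have hφbd : ∀ q, |φ q| ≤ 1 := by
      intro q
      rw [hφdef, abs_mul]
      exact mul_le_one₀ (hgbd _) (abs_nonneg _) (hgbd _)
    have heq : (fun ω => Z j ω * Z k ω) = fun ω => φ ((x j ω, x k ω), x l ω) := rfl
    rw [heq]
    have hmapint : ∫ ω, φ ((x j ω, x k ω), x l ω) ∂P = ∫ q, φ q ∂((ν.prod ν).prod ν) := by
      rw [← htriple j k hjl hkl hjk]
      exact (integral_map (((hmeas j).prodMk (hmeas k)).prodMk (hmeas l)).aemeasurable
        hφmeas.aestronglyMeasurable).symm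
    rw [hmapint, integral_prod_symm _ (rank_integrable_of_bdd hφmeas 1 hφbd)]
    have : ∀ t, ∫ p : ℝ × ℝ, φ (p, t) ∂(ν.prod ν) = 0 := by
      intro t
      have : ∫ p : ℝ × ℝ, φ (p, t) ∂(ν.prod ν)
          = (∫ a, g (a, t) ∂ν) * ∫ b, g (b, t) ∂ν := by
        exact integral_prod_mul (fun a => g (a, t)) (fun b => g (b, t))
      rw [this, hg0 t, zero_mul]
    simp_rw [this, integral_zero]
  have hdiag : ∀ j, ∫ ω, Z j ω * Z j ω ∂P ≤ 1 := by
    intro j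
    calc ∫ ω, Z j ω * Z j ω ∂P ≤ ∫ _, (1:ℝ) ∂P := by
          refine integral_mono (hZZint j j) (integrable_const _) (fun ω => ?_)
          have h := abs_le.mp (hZbd j ω)
          nlinarith [h.1, h.2]
      _ = 1 := by simp
  have hexp : ∫ ω, (∑ j ∈ Finset.range L, Z j ω)^2 ∂P
      = ∑ j ∈ Finset.range L, ∑ k ∈ Finset.range L, ∫ ω, Z j ω * Z k ω ∂P := by
    have h1 : ∀ ω, (∑ j ∈ Finset.range L, Z j ω)^2
        = ∑ j ∈ Finset.range L, ∑ k ∈ Finset.range L, Z j ω * Z k ω := by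
      intro ω; rw [sq, Finset.sum_mul_sum]
    simp_rw [h1]
    rw [integral_finset_sum _ (fun j _ => integrable_finset_sum _ (fun k _ => hZZint j k))]
    exact Finset.sum_congr rfl fun j _ => integral_finset_sum _ (fun k _ => hZZint j k)
  show ∫ ω, (∑ j ∈ Finset.range L, Z j ω)^2 ∂P ≤ L
  rw [hexp]
  calc ∑ j ∈ Finset.range L, ∑ k ∈ Finset.range L, ∫ ω, Z j ω * Z k ω ∂P
      = ∑ j ∈ Finset.range L, ∫ ω, Z j ω * Z j ω ∂P := by
        refine Finset.sum_congr rfl fun j hj => ?_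
        exact Finset.sum_eq_single_of_mem j hj fun k _ hkj => hcross j k (Ne.symm hkj)
    _ ≤ ∑ _j ∈ Finset.range L, (1:ℝ) := Finset.sum_le_sum fun j _ => hdiag j
    _ = L := by simp

/-- Let `K : (0,1) → ℝ⁺` be continuous, square integrable and
expressible on `(0,1)` as the difference of two monotone increasing functions.
Let `x 0, x 1, …` be i.i.d. real random variables with continuous cdf `F`
(the cdf of the common law `ν`), let `r_l^{(L)}` be the rank of `x l` among
`x 0, …, x (L-1)` (the number of `j < L` with `x j ≤ x l`), and let
`u_l = F (x l)` be the probability integral transform.  Then for each fixed `l`,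
`K (r_l^{(L)} / (L+1)) - K (u_l)` converges to `0` in probability as `L → ∞`. -/
theorem rank_score_approx_inProbability
    {Ω : Type*} [MeasurableSpace Ω] (P : Measure Ω) [IsProbabilityMeasure P]
    (x : ℕ → Ω → ℝ)
    (hmeas : ∀ i, Measurable (x i))
    (hindep : iIndepFun x P)
    (ν : Measure ℝ) [IsProbabilityMeasure ν]
    (hid : ∀ i, P.map (x i) = ν)
    (F : ℝ → ℝ) (hF : ∀ t, F t = (ν (Set.Iic t)).toReal) (hFcont : Continuous F)
    (K K₁ K₂ : ℝ → ℝ)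
    (hKpos : ∀ u ∈ Set.Ioo (0:ℝ) 1, 0 < K u)
    (hKcont : ContinuousOn K (Set.Ioo 0 1))
    (hKsq : IntegrableOn (fun u => (K u) ^ 2) (Set.Ioo 0 1))
    (hKdiff : ∀ u ∈ Set.Ioo (0:ℝ) 1, K u = K₁ u - K₂ u)
    (hK₁ : MonotoneOn K₁ (Set.Ioo 0 1)) (hK₂ : MonotoneOn K₂ (Set.Ioo 0 1))
    (l : ℕ) :
    ∀ ε : ℝ, 0 < ε →
      Tendsto (fun L : ℕ =>
          P {ω | ε ≤ |K ((((Finset.range L).filter (fun j => x j ω ≤ x l ω)).card : ℝ)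
                        / (L + 1))
                  - K (F (x l ω))|})
        atTop (𝓝 0) := by
  intro ε hε
  have hF0 : ∀ t, 0 ≤ F t := fun t => by rw [hF t]; exact ENNReal.toReal_nonneg
  have hF1 : ∀ t, F t ≤ 1 := fun t => by
    rw [hF t]
    exact ENNReal.toReal_le_of_le_ofReal zero_le_one
      (by simpa using prob_le_one (μ := ν) (s := Set.Iic t))
  set U : Ω → ℝ := fun ω => F (x l ω) with hUdef
  have hUmeas : Measurable U := hFcont.measurable.comp (hmeas l)
  set R : ℕ → Ω → ℝ := fun L ω =>
    (((Finset.range L).filter (fun j => x j ω ≤ x l ω)).card : ℝ) / (L + 1) with hRdef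
  set V : ℕ → Ω → ℝ := fun L ω => ∑ j ∈ Finset.range L,
    ((if x j ω ≤ x l ω then (1:ℝ) else 0) - U ω) with hVdef
  have hVmeas : ∀ L, Measurable (V L) := by
    intro L
    apply Finset.measurable_sum
    intro j _
    exact (Measurable.ite (measurableSet_le (hmeas j) (hmeas l))
      measurable_const measurable_const).sub hUmeas
  have hVbd : ∀ L ω, |V L ω| ≤ L := by
    intro L ω
    calc |V L ω| ≤ ∑ j ∈ Finset.range L, |(if x j ω ≤ x l ω then (1:ℝ) else 0) - U ω| :=
          Finset.abs_sum_le_sum_abs _ _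
      _ ≤ ∑ _j ∈ Finset.range L, (1:ℝ) := by
          refine Finset.sum_le_sum fun j _ => ?_
          have h0 := hF0 (x l ω); have h1 := hF1 (x l ω)
          split <;> rw [abs_le] <;> constructor <;>
            simp only [hUdef] <;> linarith
      _ = L := by simp
  have hVint2 : ∀ L, ∫ ω, (V L ω)^2 ∂P ≤ L := fun L =>
    rank_aux_var P x hmeas hindep ν hid F hF hFcont l L
  have hRD : ∀ L ω, R L ω - U ω = (V L ω - U ω) / (L + 1) := by
    intro L ω
    have hcard : (((Finset.range L).filter (fun j => x j ω ≤ x l ω)).card : ℝ)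
        = ∑ j ∈ Finset.range L, (if x j ω ≤ x l ω then (1:ℝ) else 0) := by
      rw [Finset.card_filter]
      push_cast
      refine Finset.sum_congr rfl fun j _ => ?_
      split <;> simp
    have hsum : V L ω = (∑ j ∈ Finset.range L,
        (if x j ω ≤ x l ω then (1:ℝ) else 0)) - L * U ω := by
      simp only [hVdef, Finset.sum_sub_distrib, Finset.sum_const, Finset.card_range,
        nsmul_eq_mul]
    have hL1 : ((L:ℝ) + 1) ≠ 0 := by positivity
    rw [hRdef]
    simp only [hcard]
    field_simp
    linarith [hsum]
  have hU0 : ∀ ω, 0 ≤ U ω := fun ω => hF0 _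
  have hU1 : ∀ ω, U ω ≤ 1 := fun ω => hF1 _
  rw [ENNReal.tendsto_nhds_zero]
  intro e he
  obtain ⟨η, hη, hηe⟩ : ∃ η : ℝ, 0 < η ∧ ENNReal.ofReal η ≤ e := by
    rcases eq_or_ne e ⊤ with rfl | hetop
    · exact ⟨1, one_pos, le_top⟩
    · exact ⟨e.toReal, ENNReal.toReal_pos he.ne' hetop,
        by rw [ENNReal.ofReal_toReal hetop]⟩
  -- choose N so that U is in a fixed compact subinterval with high probability
  set Bs : ℕ → Set Ω := fun n =>
    {ω | U ω ∉ Set.Icc (1/(n+2) : ℝ) (1 - 1/(n+2))} with hBdef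
  have hBmeas : ∀ n, MeasurableSet (Bs n) := fun n =>
    (hUmeas measurableSet_Icc).compl
  have hBanti : Antitone Bs := by
    intro n m hnm ω hω
    simp only [hBdef, Set.mem_setOf_eq, Set.mem_Icc, not_and_or, not_le] at hω ⊢
    have hle : (1:ℝ)/(m+2) ≤ 1/(n+2) := by
      apply one_div_le_one_div_of_le
      · positivity
      · push_cast; linarith [(Nat.cast_le (α := ℝ)).mpr hnm]
    rcases hω with h | h
    · left; linarith
    · right; linarith
  have hinter : P (⋂ n, Bs n) = 0 := by
    have hsub : (⋂ n, Bs n) ⊆ {ω | U ω ∉ Set.Ioo 0 1} := by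
      intro ω hω hmem
      obtain ⟨n, hn⟩ := exists_nat_one_div_lt (lt_min hmem.1 (by linarith [hmem.2]) :
        (0:ℝ) < min (U ω) (1 - U ω))
      have hωn := Set.mem_iInter.mp hω n
      simp only [hBdef, Set.mem_setOf_eq, Set.mem_Icc, not_and_or, not_le] at hωn
      have h2 : (1:ℝ)/(n+2) ≤ 1/(n+1) := by
        apply one_div_le_one_div_of_le
        · positivity
        · push_cast; linarith
      have hmin := lt_min_iff.mp hn
      rcases hωn with h | h
      · linarith [h2.trans_lt hmin.1]
      · linarith [h2.trans_lt hmin.2]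
    have h0 : P {ω | U ω ∉ Set.Ioo (0:ℝ) 1} = 0 := by
      have hSmeas : MeasurableSet {t : ℝ | F t ∉ Set.Ioo (0:ℝ) 1} :=
        (hFcont.measurable measurableSet_Ioo).compl
      have : {ω | U ω ∉ Set.Ioo (0:ℝ) 1} = x l ⁻¹' {t | F t ∉ Set.Ioo (0:ℝ) 1} := rfl
      rw [this, ← Measure.map_apply (hmeas l) hSmeas, hid l]
      exact rank_aux_nu ν F hF hFcont
    exact le_antisymm (le_trans (measure_mono hsub) h0.le) (zero_le)
  have htendB := tendsto_measure_iInter_atTop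
    (fun n => (hBmeas n).nullMeasurableSet) hBanti ⟨0, measure_ne_top P _⟩
  rw [hinter] at htendB
  have hofr2 : (0:ENNReal) < ENNReal.ofReal (η/2) := ENNReal.ofReal_pos.mpr (half_pos hη)
  obtain ⟨N, hN⟩ := (htendB.eventually (eventually_le_nhds hofr2)).exists
  set a : ℝ := 1/(N+2) with hadef
  have ha0 : 0 < a := by rw [hadef]; positivity
  have ha2 : a ≤ 1/2 := by
    rw [hadef]
    apply one_div_le_one_div_of_le
    · norm_num
    · push_cast; linarith [Nat.cast_nonneg (α := ℝ) N]
  set s : Set ℝ := Set.Icc (a/2) (1 - a/2) with hsdef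
  have hs_sub : s ⊆ Set.Ioo (0:ℝ) 1 := by
    intro y hy
    constructor
    · linarith [hy.1]
    · linarith [hy.2]
  have hucont : UniformContinuousOn K s :=
    isCompact_Icc.uniformContinuousOn_of_continuous (hKcont.mono hs_sub)
  rw [Metric.uniformContinuousOn_iff] at hucont
  obtain ⟨δ, hδ0, hδ⟩ := hucont ε hε
  set δ' : ℝ := min δ (a/2) with hδ'def
  have hδ'0 : 0 < δ' := lt_min hδ0 (by positivity)
  have hδ'δ : δ' ≤ δ := min_le_left _ _
  have hδ'a : δ' ≤ a/2 := min_le_right _ _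
  -- inclusion of events
  have hincl : ∀ L : ℕ, ∀ ω, ε ≤ |K (R L ω) - K (U ω)| →
      ω ∈ Bs N ∨ δ' ≤ |R L ω - U ω| := by
    intro L ω h
    by_contra hcon
    push_neg at hcon
    obtain ⟨hB, hd⟩ := hcon
    have hUmem : U ω ∈ Set.Icc a (1 - a) := by
      have := hB
      simp only [hBdef, Set.mem_setOf_eq, not_not] at this
      exact this
    have habs := abs_lt.mp hd
    have h1 : U ω ∈ s := by
      rw [hsdef, Set.mem_Icc]
      exact ⟨by linarith [hUmem.1], by linarith [hUmem.2]⟩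
    have h2 : R L ω ∈ s := by
      rw [hsdef, Set.mem_Icc]
      constructor
      · linarith [hUmem.1, habs.1]
      · linarith [hUmem.2, habs.2]
    have hdist : dist (R L ω) (U ω) < δ := by
      rw [Real.dist_eq]
      exact lt_of_lt_of_le hd hδ'δ
    have := hδ (R L ω) h2 (U ω) h1 hdist
    rw [Real.dist_eq] at this
    linarith
  -- Chebyshev bound
  have hcheb : ∀ L : ℕ,
      (P {ω | δ' ≤ |R L ω - U ω|}).toReal ≤ 2/(δ'^2 * (L+1)) := by
    intro L
    set D : Ω → ℝ := fun ω => (V L ω - U ω) / (L + 1) with hDdef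
    have hRD' : ∀ ω, R L ω - U ω = D ω := fun ω => hRD L ω
    have hLpos : (0:ℝ) < (L:ℝ) + 1 := by positivity
    have hDmeas : Measurable D := ((hVmeas L).sub hUmeas).div_const _
    have hDbd : ∀ ω, |D ω| ≤ 1 := by
      intro ω
      rw [hDdef]
      simp only [abs_div, abs_of_pos hLpos]
      rw [div_le_one hLpos]
      calc |V L ω - U ω| ≤ |V L ω| + |U ω| := abs_sub _ _
        _ ≤ L + 1 := by
            have := hVbd L ω
            have h0 := hU0 ω; have h1 := hU1 ω
            have : |U ω| ≤ 1 := by rw [abs_le]; constructor <;> linarith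
            linarith [hVbd L ω]
    have hDint2 : Integrable (fun ω => D ω ^ 2) P := by
      refine rank_integrable_of_bdd (hDmeas.pow_const 2) 1 fun ω => ?_
      rw [abs_pow]
      calc |D ω| ^ 2 ≤ 1 ^ 2 := pow_le_pow_left₀ (abs_nonneg _) (hDbd ω) 2
        _ = 1 := one_pow 2
    have hVU : ∫ ω, (V L ω - U ω)^2 ∂P ≤ 2*L + 2 := by
      have hpt : ∀ ω, (V L ω - U ω)^2 ≤ 2*(V L ω)^2 + 2*(U ω)^2 := by
        intro ω; nlinarith [sq_nonneg (V L ω + U ω)]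
      have hiV2 : Integrable (fun ω => (V L ω)^2) P := by
        refine rank_integrable_of_bdd ((hVmeas L).pow_const 2) ((L:ℝ)^2) fun ω => ?_
        rw [abs_pow]
        exact pow_le_pow_left₀ (abs_nonneg _) (hVbd L ω) 2
      have hiU2 : Integrable (fun ω => (U ω)^2) P := by
        refine rank_integrable_of_bdd (hUmeas.pow_const 2) 1 fun ω => ?_
        rw [abs_pow]
        calc |U ω| ^ 2 ≤ 1^2 := by
              refine pow_le_pow_left₀ (abs_nonneg _) ?_ 2
              rw [abs_le]; constructor <;> [linarith [hU0 ω]; exact hU1 ω]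
          _ = 1 := one_pow 2
      have hi1 : Integrable (fun ω => (V L ω - U ω)^2) P := by
        refine rank_integrable_of_bdd (((hVmeas L).sub hUmeas).pow_const 2)
          (((L:ℝ)+1)^2) fun ω => ?_
        rw [abs_pow]
        refine pow_le_pow_left₀ (abs_nonneg _) ?_ 2
        calc |V L ω - U ω| ≤ |V L ω| + |U ω| := abs_sub _ _
          _ ≤ L + 1 := by
              have : |U ω| ≤ 1 := by
                rw [abs_le]; constructor <;> [linarith [hU0 ω]; exact hU1 ω]
              linarith [hVbd L ω]
      have hU2le : ∫ ω, (U ω)^2 ∂P ≤ 1 := by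
        calc ∫ ω, (U ω)^2 ∂P ≤ ∫ _, (1:ℝ) ∂P := by
              refine integral_mono hiU2 (integrable_const _) fun ω => ?_
              nlinarith [hU0 ω, hU1 ω]
          _ = 1 := by simp
      calc ∫ ω, (V L ω - U ω)^2 ∂P
          ≤ ∫ ω, 2*(V L ω)^2 + 2*(U ω)^2 ∂P := by
            refine integral_mono hi1 ((hiV2.const_mul 2).add (hiU2.const_mul 2)) fun ω => hpt ω
        _ = 2*(∫ ω, (V L ω)^2 ∂P) + 2*(∫ ω, (U ω)^2 ∂P) := by
            rw [integral_add (hiV2.const_mul 2) (hiU2.const_mul 2),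
              integral_const_mul, integral_const_mul]
        _ ≤ 2*L + 2 := by
            have := hVint2 L
            linarith [hU2le]
    have hDint2val : ∫ ω, D ω ^ 2 ∂P ≤ 2/((L:ℝ)+1) := by
      have heq : (fun ω => D ω ^ 2) = fun ω => (V L ω - U ω)^2 / ((L:ℝ)+1)^2 := by
        funext ω; rw [hDdef]; rw [div_pow]
      rw [heq, integral_div]
      rw [div_le_div_iff₀ (by positivity) hLpos]
      nlinarith [hVU]
    have hev : {ω | δ' ≤ |R L ω - U ω|} = {ω | δ'^2 ≤ D ω ^ 2} := by
      ext ω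
      simp only [Set.mem_setOf_eq, hRD' ω]
      constructor
      · intro h
        rw [← sq_abs (D ω)]
        exact pow_le_pow_left₀ hδ'0.le h 2
      · intro h
        rw [← sq_abs (D ω)] at h
        exact le_of_pow_le_pow_left₀ two_ne_zero (abs_nonneg _) h
    have hmarkov := mul_meas_ge_le_integral_of_nonneg
      (ae_of_all P fun ω => sq_nonneg (D ω)) hDint2 (δ'^2)
    rw [hev]
    have h1 : δ'^2 * (P {ω | δ'^2 ≤ D ω ^ 2}).toReal ≤ 2/((L:ℝ)+1) :=
      le_trans hmarkov hDint2val
    rw [le_div_iff₀ (by positivity)]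
    have h2 : ((2:ℝ)/((L:ℝ)+1)) * ((L:ℝ)+1) = 2 := by field_simp
    nlinarith [ENNReal.toReal_nonneg (a := P {ω | δ'^2 ≤ D ω ^ 2})]
  -- eventual smallness
  have htendC : Tendsto (fun L : ℕ => 2/(δ'^2 * ((L:ℝ)+1))) atTop (𝓝 0) := by
    have h0 : Tendsto (fun L : ℕ => 1/((L:ℝ)+1)) atTop (𝓝 0) :=
      tendsto_one_div_add_atTop_nhds_zero_nat
    have h1 := h0.const_mul (2/δ'^2)
    rw [mul_zero] at h1
    have heq : (fun L : ℕ => 2/(δ'^2 * ((L:ℝ)+1)))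
        = fun L : ℕ => (2/δ'^2) * (1/((L:ℝ)+1)) := by
      funext L
      rw [div_mul_div_comm, mul_one]
    rw [heq]
    exact h1
  have hev2 : ∀ᶠ L : ℕ in atTop, 2/(δ'^2*((L:ℝ)+1)) ≤ η/2 :=
    htendC.eventually (eventually_le_nhds (half_pos hη))
  filter_upwards [hev2] with L hL
  have hsecond : P {ω | δ' ≤ |R L ω - U ω|} ≤ ENNReal.ofReal (η/2) := by
    have htr : (P {ω | δ' ≤ |R L ω - U ω|}).toReal ≤ η/2 := (hcheb L).trans hL
    calc P {ω | δ' ≤ |R L ω - U ω|}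
        = ENNReal.ofReal ((P {ω | δ' ≤ |R L ω - U ω|}).toReal) :=
          (ENNReal.ofReal_toReal (measure_ne_top P _)).symm
      _ ≤ ENNReal.ofReal (η/2) := ENNReal.ofReal_le_ofReal htr
  calc P {ω | ε ≤ |K (R L ω) - K (U ω)|}
      ≤ P (Bs N ∪ {ω | δ' ≤ |R L ω - U ω|}) := by
        refine measure_mono fun ω h => ?_
        rcases hincl L ω h with h' | h'
        · exact Or.inl h'
        · exact Or.inr h'
    _ ≤ P (Bs N) + P {ω | δ' ≤ |R L ω - U ω|} := measure_union_le _ _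
    _ ≤ ENNReal.ofReal (η/2) + ENNReal.ofReal (η/2) := add_le_add hN hsecond
    _ = ENNReal.ofReal η := by
        rw [← ENNReal.ofReal_add (by positivity) (by positivity)]
        norm_num
    _ ≤ e := hηe
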